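/- Let R be a finite ring with identity and J(R) its Jacobson radical. Then the unitary Cayley graph Γ(R) is well-covered if and only if the unitary Cayley graph Γ(R/J(R)) is well-covered. -/

import Mathlib

open Pointwise

/-- The unitary Cayley graph of a ring `R`: vertices are elements of `R`,
and `x`, `y` are adjacent iff `x - y` is a unit. -/
def unitaryCayley (R : Type*) [Ring R] : SimpleGraph R where
  Adj x y := x ≠ y ∧ IsUnit (x - y)
  symm := by
    constructor
    rintro x y ⟨hne, hu⟩
    exact ⟨hne.symm, by simpa [neg_sub] using hu.neg⟩
  loopless := by constructor; rintro x ⟨h, -⟩; exact h rfl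

/-- A set of vertices is independent if its elements are pairwise nonadjacent. -/
def IsIndepSet {V : Type*} (G : SimpleGraph V) (A : Set V) : Prop :=
  A.Pairwise fun x y => ¬ G.Adj x y

/-- A maximal independent set. -/
def IsMaxIndepSet {V : Type*} (G : SimpleGraph V) (A : Set V) : Prop :=
  IsIndepSet G A ∧ ∀ B : Set V, IsIndepSet G B → A ⊆ B → A = B

/-- A graph is well-covered if all its maximal independent sets have the same cardinality. -/
def WellCovered {V : Type*} (G : SimpleGraph V) : Prop :=
  ∀ A B : Set V, IsMaxIndepSet G A → IsMaxIndepSet G B → A.ncard = B.ncard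

/-- The reduced `k`-diagonal matrix `D_k(a)`:  the `(i, j)` entry is `a (i - k)`
when `j = i + k` (mod `n`) and `i ≠ k`, and `0` otherwise. -/
def Dmat {n : ℕ} (F : Type*) [Field F] (k : Fin n) (a : Fin n → F) :
    Matrix (Fin n) (Fin n) F :=
  Matrix.of fun i j => if i ≠ k ∧ j = i + k then a (i - k) else 0

/-- The family `𝒟` of all reduced diagonal matrices `D_k(a₁, …, a_{n-1})`. -/
def DSet {n : ℕ} (F : Type*) [Field F] : Set (Matrix (Fin n) (Fin n) F) :=
  {M | ∃ (k : Fin n) (a : Fin n → F), M = Dmat F k a}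

/-- The Jacobson radical of a (possibly noncommutative) ring, as a two-sided ideal. -/
noncomputable def jacRad (R : Type*) [Ring R] : TwoSidedIdeal R :=
  (⊥ : TwoSidedIdeal R).jacobson

/-- The quotient of `R` by its Jacobson radical. -/
abbrev JacQuot (R : Type*) [Ring R] := (jacRad R).ringCon.Quotient

/-- The quotient map `R → R/J(R)`. -/
noncomputable def jacMk (R : Type*) [Ring R] : R →+* JacQuot R := (jacRad R).ringCon.mk'

section Aux
variable {R : Type*} [Ring R]

lemma finMul_comm {M : Type*} [Monoid M] [Finite M] {a b : M} (h : a * b = 1) : b * a = 1 := by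
  have hinj : Function.Injective (fun x : M => b * x) := by
    intro x y hxy
    have : a * (b * x) = a * (b * y) := by simp [hxy]
    simpa [← mul_assoc, h] using this
  obtain ⟨c, hc⟩ := (Finite.injective_iff_surjective.mp hinj) 1
  have hac : c = a := by
    have := congrArg (a * ·) hc
    simpa [← mul_assoc, h] using this
  simpa [hac] using hc

lemma jacMk_surj : Function.Surjective (jacMk R) := fun q =>
  Quotient.inductionOn' q fun x => ⟨x, rfl⟩

lemma jacMk_eq_iff {x y : R} : jacMk R x = jacMk R y ↔ x - y ∈ jacRad R := by
  rw [show jacMk R x = jacMk R y ↔ (jacRad R).ringCon x y from RingCon.eq _]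
  exact TwoSidedIdeal.rel_iff _ _ _

lemma jac_quasi {j : R} (hj : j ∈ jacRad R) : ∃ z : R, z * (1 + j) = 1 := by
  obtain ⟨z, hz⟩ := (TwoSidedIdeal.mem_jacobson_iff.mp hj) 1
  rw [TwoSidedIdeal.mem_bot] at hz
  refine ⟨z, ?_⟩
  have : z * 1 * j + z - 1 = 0 := hz
  calc z * (1 + j) = z * 1 * j + z := by noncomm_ring
  _ = 1 := by rw [← sub_eq_zero]; exact this

lemma jac_isUnit_iff [Finite R] {x : R} : IsUnit (jacMk R x) ↔ IsUnit x := by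
  constructor
  · intro h
    obtain ⟨u, hu⟩ := h
    obtain ⟨y, hy⟩ := jacMk_surj (R := R) ↑u⁻¹
    have h1 : jacMk R (x * y) = jacMk R 1 := by
      rw [map_mul, map_one, ← hu, hy]; exact u.mul_inv
    obtain ⟨z, hz⟩ := jac_quasi (jacMk_eq_iff.mp h1)
    have hz' : z * (x * y) = 1 := by
      have h4 : (1 : R) + (x * y - 1) = x * y := by abel
      rwa [h4] at hz
    have h2 : (x * y) * z = 1 := finMul_comm hz'
    have h3 : x * (y * z) = 1 := by rw [← mul_assoc]; exact h2
    exact ⟨⟨x, y * z, h3, finMul_comm h3⟩, rfl⟩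
  · exact fun h => h.map _

lemma adj_iff [Finite R] {x y : R} :
    (unitaryCayley R).Adj x y ↔ (unitaryCayley (JacQuot R)).Adj (jacMk R x) (jacMk R y) := by
  constructor
  · rintro ⟨hne, hu⟩
    refine ⟨?_, by rw [← map_sub]; exact hu.map _⟩
    intro heq
    have hmem : x - y ∈ jacRad R := jacMk_eq_iff.mp heq
    obtain ⟨u, hu'⟩ := hu
    have h1 : (1 : R) ∈ jacRad R := by
      have := (jacRad R).mul_mem_left (↑u⁻¹) _ hmem
      rwa [← hu', u.inv_mul] at this
    obtain ⟨z, hz⟩ := jac_quasi ((jacRad R).neg_mem h1)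
    have h01 : (0 : R) = 1 := by simpa using hz
    have : Subsingleton R := subsingleton_of_zero_eq_one h01
    exact hne (Subsingleton.elim x y)
  · rintro ⟨hne, hu⟩
    refine ⟨fun h => hne (by rw [h]), ?_⟩
    rw [← map_sub] at hu
    exact jac_isUnit_iff.mp hu
end Aux

section Graph
variable {V W : Type*} {G : SimpleGraph V} {H : SimpleGraph W} {f : V → W}

lemma indep_preimage (hadj : ∀ x y, G.Adj x y ↔ H.Adj (f x) (f y))
    {B : Set W} (hB : IsIndepSet H B) : IsIndepSet G (f ⁻¹' B) := by
  intro x hx y hy hxy hAdj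
  have h' := (hadj x y).mp hAdj
  exact hB hx hy h'.ne h'

lemma indep_image (hadj : ∀ x y, G.Adj x y ↔ H.Adj (f x) (f y))
    {A : Set V} (hA : IsIndepSet G A) : IsIndepSet H (f '' A) := by
  rintro _ ⟨a, ha, rfl⟩ _ ⟨b, hb, rfl⟩ hne hAdj
  have hab : a ≠ b := fun h => hne (by rw [h])
  exact hA ha hb hab ((hadj a b).mpr hAdj)

lemma max_eq_preimage (hadj : ∀ x y, G.Adj x y ↔ H.Adj (f x) (f y))
    {A : Set V} (hA : IsMaxIndepSet G A) : A = f ⁻¹' (f '' A) :=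
  hA.2 _ (indep_preimage hadj (indep_image hadj hA.1)) (Set.subset_preimage_image f A)

lemma max_image (hsurj : Function.Surjective f) (hadj : ∀ x y, G.Adj x y ↔ H.Adj (f x) (f y))
    {A : Set V} (hA : IsMaxIndepSet G A) : IsMaxIndepSet H (f '' A) := by
  refine ⟨indep_image hadj hA.1, fun B hB hsub => ?_⟩
  have h1 : A = f ⁻¹' B := hA.2 _ (indep_preimage hadj hB)
    ((Set.subset_preimage_image f A).trans (Set.preimage_mono hsub))
  rw [h1, Set.image_preimage_eq B hsurj]

lemma max_preimage (hsurj : Function.Surjective f) (hadj : ∀ x y, G.Adj x y ↔ H.Adj (f x) (f y))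
    {B : Set W} (hB : IsMaxIndepSet H B) : IsMaxIndepSet G (f ⁻¹' B) := by
  refine ⟨indep_preimage hadj hB.1, fun A hA hsub => ?_⟩
  have h2 : B = f '' A := hB.2 _ (indep_image hadj hA)
    (by rw [← Set.image_preimage_eq B hsurj]; exact Set.image_mono hsub)
  refine Set.Subset.antisymm hsub fun a ha => ?_
  show f a ∈ B
  rw [h2]; exact ⟨a, ha, rfl⟩
end Graph

noncomputable def fiberEquiv {R : Type*} [Ring R] (B : Set (JacQuot R)) :
    (jacMk R ⁻¹' B) ≃ B × (jacMk R ⁻¹' ({0} : Set (JacQuot R))) := by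
  classical
  set s : JacQuot R → R := Function.surjInv jacMk_surj with hs_def
  have hs : ∀ b, jacMk R (s b) = b := fun b => Function.surjInv_eq jacMk_surj b
  refine
    { toFun := fun x => (⟨jacMk R x.1, x.2⟩,
        ⟨x.1 - s (jacMk R x.1), by simp [Set.mem_preimage, map_sub, hs]⟩)
      invFun := fun p => ⟨s p.1.1 + p.2.1, ?_⟩
      left_inv := ?_
      right_inv := ?_ }
  · show jacMk R _ ∈ B
    have hj : jacMk R p.2.1 = 0 := by
      have h := p.2.2
      rwa [Set.mem_preimage, Set.mem_singleton_iff] at h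
    rw [map_add, hj, add_zero, hs]
    exact p.1.2
  · rintro ⟨x, hx⟩
    ext
    show s (jacMk R x) + (x - s (jacMk R x)) = x
    abel
  · rintro ⟨⟨b, hb⟩, ⟨j, hj⟩⟩
    have hj0 : jacMk R j = 0 := by simpa using hj
    have hb' : jacMk R (s b + j) = b := by rw [map_add, hj0, add_zero, hs]
    refine Prod.ext (Subtype.ext (by simpa using hb')) (Subtype.ext ?_)
    show (s b + j) - s (jacMk R (s b + j)) = j
    rw [hb']
    abel

lemma ncard_preimage {R : Type*} [Ring R] [Finite R] (B : Set (JacQuot R)) :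
    (jacMk R ⁻¹' B).ncard = B.ncard * (jacMk R ⁻¹' ({0} : Set (JacQuot R))).ncard := by
  rw [← Nat.card_coe_set_eq, ← Nat.card_coe_set_eq, ← Nat.card_coe_set_eq,
    Nat.card_congr (fiberEquiv B), Nat.card_prod]

theorem stmt9 (R : Type*) [Ring R] [Finite R] :
    WellCovered (unitaryCayley R) ↔ WellCovered (unitaryCayley (JacQuot R)) := by
  have hadj : ∀ x y : R, (unitaryCayley R).Adj x y ↔
      (unitaryCayley (JacQuot R)).Adj (jacMk R x) (jacMk R y) := fun x y => adj_iff
  have hsurj : Function.Surjective (jacMk R) := jacMk_surj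
  have hQfin : Finite (JacQuot R) := Finite.of_surjective _ hsurj
  constructor
  · intro hWC A B hA hB
    have h := hWC _ _ (max_preimage hsurj hadj hA) (max_preimage hsurj hadj hB)
    rw [ncard_preimage A, ncard_preimage B] at h
    have hpos : 0 < (jacMk R ⁻¹' ({0} : Set (JacQuot R))).ncard :=
      (Set.ncard_pos (Set.toFinite _)).mpr ⟨0, by simp⟩
    exact Nat.eq_of_mul_eq_mul_right hpos h
  · intro hWC A B hA hB
    rw [max_eq_preimage hadj hA, max_eq_preimage hadj hB, ncard_preimage (jacMk R '' A),
      ncard_preimage (jacMk R '' B),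
      hWC _ _ (max_image hsurj hadj hA) (max_image hsurj hadj hB)]
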